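/- Let R be a commutative ring with identity and M a strong comultiplication R-module. Then every non-zero proper ideal of R is a strongly sum 2-irreducible submodule of the R-module R if and only if every non-zero proper submodule of M is a strongly 2-irreducible submodule of M. -/
import Mathlib


def IsStrongly2Irreducible {R M : Type*} [CommRing R] [AddCommGroup M] [Module R M]
    (N : Submodule R M) : Prop :=
  N ≠ ⊤ ∧ ∀ H₁ H₂ H₃ : Submodule R M, H₁ ⊓ H₂ ⊓ H₃ ≤ N →
    H₁ ⊓ H₂ ≤ N ∨ H₁ ⊓ H₃ ≤ N ∨ H₂ ⊓ H₃ ≤ N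

def IsStronglySum2Irreducible {R M : Type*} [CommRing R] [AddCommGroup M] [Module R M]
    (N : Submodule R M) : Prop :=
  ∀ H₁ H₂ H₃ : Submodule R M, N ≤ H₁ ⊔ H₂ ⊔ H₃ →
    N ≤ H₁ ⊔ H₂ ∨ N ≤ H₁ ⊔ H₃ ∨ N ≤ H₂ ⊔ H₃

def IsComultiplicationModule (R M : Type*) [CommRing R] [AddCommGroup M] [Module R M] : Prop :=
  ∀ N : Submodule R M, N = Submodule.torsionBySet R M (N.annihilator : Set R)

def HasDAC (R M : Type*) [CommRing R] [AddCommGroup M] [Module R M] : Prop :=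
  ∀ I : Ideal R, I = (Submodule.torsionBySet R M (I : Set R)).annihilator

theorem stmt_6 {R M : Type*} [CommRing R] [AddCommGroup M] [Module R M]
    (hcm : IsComultiplicationModule R M) (hdac : HasDAC R M) :
    (∀ I : Ideal R, I ≠ ⊥ → I ≠ ⊤ → IsStronglySum2Irreducible I) ↔
      (∀ N : Submodule R M, N ≠ ⊥ → N ≠ ⊤ → IsStrongly2Irreducible N) := by
  -- the Galois connection
  have gc : ∀ (I : Ideal R) (N : Submodule R M),
      N ≤ Submodule.torsionBySet R M (I : Set R) ↔ I ≤ N.annihilator := by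
    intro I N
    constructor
    · intro h r hr
      rw [Submodule.mem_annihilator]
      intro n hn
      have := h hn
      rw [Submodule.mem_torsionBySet_iff] at this
      exact this ⟨r, hr⟩
    · intro h n hn
      rw [Submodule.mem_torsionBySet_iff]
      rintro ⟨r, hr⟩
      exact Submodule.mem_annihilator.mp (h hr) n hn
  -- torsion is antitone
  have tmono : ∀ I J : Ideal R, I ≤ J →
      Submodule.torsionBySet R M (J : Set R) ≤ Submodule.torsionBySet R M (I : Set R) := by
    intro I J hIJ
    rw [gc]
    calc I ≤ J := hIJ
      _ = _ := hdac J
  -- annihilator is antitone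
  have amono : ∀ P Q : Submodule R M, P ≤ Q → Q.annihilator ≤ P.annihilator := by
    intro P Q hPQ r hr
    rw [Submodule.mem_annihilator] at hr ⊢
    exact fun n hn => hr n (hPQ hn)
  -- torsion turns sup into inf
  have tsup : ∀ I J : Ideal R,
      Submodule.torsionBySet R M ((I ⊔ J : Ideal R) : Set R)
        = Submodule.torsionBySet R M (I : Set R) ⊓ Submodule.torsionBySet R M (J : Set R) := by
    intro I J
    apply le_antisymm
    · exact le_inf (tmono I (I ⊔ J) le_sup_left) (tmono J (I ⊔ J) le_sup_right)
    · rw [gc]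
      exact sup_le ((gc I _).mp inf_le_left) ((gc J _).mp inf_le_right)
  -- torsion of the zero ideal is everything
  have tbot : Submodule.torsionBySet R M ((⊥ : Ideal R) : Set R) = ⊤ := by
    rw [eq_top_iff]
    intro x _
    rw [Submodule.mem_torsionBySet_iff]
    rintro ⟨r, hr⟩
    simp only [Ideal.mem_bot, SetLike.mem_coe, Submodule.mem_bot] at hr
    simp [hr]
  -- annihilator of ⊤ is ⊥
  have atop : (⊤ : Submodule R M).annihilator = ⊥ := by
    rw [← tbot]; exact (hdac ⊥).symm
  -- annihilator turns inf into sup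
  have ainf : ∀ P Q : Submodule R M, (P ⊓ Q).annihilator = P.annihilator ⊔ Q.annihilator := by
    intro P Q
    have h1 : P ⊓ Q = Submodule.torsionBySet R M
        ((P.annihilator ⊔ Q.annihilator : Ideal R) : Set R) := by
      rw [tsup, ← hcm P, ← hcm Q]
    rw [h1, ← hdac]
  -- annihilator = ⊤ iff N = ⊥
  have atopiff : ∀ N : Submodule R M, N.annihilator = ⊤ → N = ⊥ := by
    intro N hN
    rw [eq_bot_iff]
    intro n hn
    have h1 : (1 : R) ∈ N.annihilator := hN ▸ Submodule.mem_top
    have := Submodule.mem_annihilator.mp h1 n hn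
    simpa using this
  have abotiff : ∀ N : Submodule R M, N.annihilator = ⊥ → N = ⊤ := by
    intro N hN
    have := hcm N
    rw [hN, tbot] at this
    exact this
  have tbotiff : ∀ I : Ideal R, Submodule.torsionBySet R M (I : Set R) = ⊥ → I = ⊤ := by
    intro I hI
    have := hdac I
    rw [hI] at this
    have h2 : (⊥ : Submodule R M).annihilator = ⊤ := by
      rw [eq_top_iff]
      intro r _
      rw [Submodule.mem_annihilator]
      intro n hn
      simp only [Submodule.mem_bot] at hn
      simp [hn]
    rw [h2] at this
    exact this
  have ttopiff : ∀ I : Ideal R, Submodule.torsionBySet R M (I : Set R) = ⊤ → I = ⊥ := by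
    intro I hI
    rw [hdac I, hI, atop]
  constructor
  · -- ideals side → submodules side
    intro h N hN0 hNT
    refine ⟨hNT, ?_⟩
    intro H₁ H₂ H₃ hle
    set J := N.annihilator with hJ
    have hJ0 : J ≠ ⊥ := fun hc => hNT (abotiff N hc)
    have hJT : J ≠ ⊤ := fun hc => hN0 (atopiff N hc)
    have key : J ≤ H₁.annihilator ⊔ H₂.annihilator ⊔ H₃.annihilator := by
      have := amono _ _ hle
      rwa [ainf, ainf] at this
    have hN : N = Submodule.torsionBySet R M (J : Set R) := hcm N
    rcases h J hJ0 hJT _ _ _ key with hc | hc | hc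
    · left
      have : H₁ ⊓ H₂ = Submodule.torsionBySet R M
          ((H₁.annihilator ⊔ H₂.annihilator : Ideal R) : Set R) := by
        rw [tsup, ← hcm H₁, ← hcm H₂]
      rw [this, hN]
      exact tmono _ _ hc
    · right; left
      have : H₁ ⊓ H₃ = Submodule.torsionBySet R M
          ((H₁.annihilator ⊔ H₃.annihilator : Ideal R) : Set R) := by
        rw [tsup, ← hcm H₁, ← hcm H₃]
      rw [this, hN]
      exact tmono _ _ hc
    · right; right
      have : H₂ ⊓ H₃ = Submodule.torsionBySet R M
          ((H₂.annihilator ⊔ H₃.annihilator : Ideal R) : Set R) := by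
        rw [tsup, ← hcm H₂, ← hcm H₃]
      rw [this, hN]
      exact tmono _ _ hc
  · -- submodules side → ideals side
    intro h I hI0 hIT K₁ K₂ K₃ hle
    set N := Submodule.torsionBySet R M (I : Set R) with hNdef
    have hN0 : N ≠ ⊥ := fun hc => hIT (tbotiff I hc)
    have hNT : N ≠ ⊤ := fun hc => hI0 (ttopiff I hc)
    have key : Submodule.torsionBySet R M ((K₁ : Set R)) ⊓
        Submodule.torsionBySet R M ((K₂ : Set R)) ⊓
        Submodule.torsionBySet R M ((K₃ : Set R)) ≤ N := by
      rw [← tsup, ← tsup]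
      exact tmono _ _ hle
    rcases (h N hN0 hNT).2 _ _ _ key with hc | hc | hc
    · left
      have := amono _ _ hc
      rw [← tsup, ← hdac, ← hdac] at this
      exact this
    · right; left
      have := amono _ _ hc
      rw [← tsup, ← hdac, ← hdac] at this
      exact this
    · right; right
      have := amono _ _ hc
      rw [← tsup, ← hdac, ← hdac] at this
      exact this
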